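/- Let ψ be a unit speed curve with κ > 0 and let f = τ/κ. If ψ is a slant helix with ⟨N, d⟩ = n for a fixed unit vector d (0 < |n| < 1), then along the curve the geodesic curvature of the principal normal indicatrix, κ²/(κ²+τ²)^{3/2} · (τ/κ)' (derivative with respect to arclength s), is constant equal to ±n/√(1-n²). -/

import Mathlib

open Real
open scoped RealInnerProductSpace

lemma parseval3 (u v w d : EuclideanSpace ℝ (Fin 3))
    (hu : ‖u‖ = 1) (hv : ‖v‖ = 1) (hw : ‖w‖ = 1)
    (huv : ⟪u, v⟫ = 0) (huw : ⟪u, w⟫ = 0) (hvw : ⟪v, w⟫ = 0) :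
    ⟪u, d⟫ ^ 2 + ⟪v, d⟫ ^ 2 + ⟪w, d⟫ ^ 2 = ‖d‖ ^ 2 := by
  have horth : Orthonormal ℝ ![u, v, w] := by
    constructor
    · intro i
      fin_cases i <;> simpa
    · intro i j hij
      fin_cases i <;> fin_cases j <;>
        first
          | exact absurd rfl hij
          | exact huv | exact huw | exact hvw
          | (rw [real_inner_comm]; first | exact huv | exact huw | exact hvw)
  have hcard : Fintype.card (Fin 3) = Module.finrank ℝ (EuclideanSpace ℝ (Fin 3)) := by
    simp [finrank_euclideanSpace]
  let b := basisOfOrthonormalOfCardEqFinrank horth hcard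
  have hb : ⇑b = ![u, v, w] := coe_basisOfOrthonormalOfCardEqFinrank horth hcard
  let ob : OrthonormalBasis (Fin 3) ℝ (EuclideanSpace ℝ (Fin 3)) :=
    b.toOrthonormalBasis (by rw [hb]; exact horth)
  have hob : ⇑ob = ![u, v, w] := by
    rw [show ⇑ob = ⇑b from Module.Basis.coe_toOrthonormalBasis b _, hb]
  have h2 := ob.sum_inner_mul_inner d d
  rw [Fin.sum_univ_three, hob] at h2
  simp only [Matrix.cons_val_zero, Matrix.cons_val_one, Matrix.head_cons,
    Matrix.cons_val_two, Matrix.tail_cons] at h2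
  rw [real_inner_self_eq_norm_sq, real_inner_comm u d, real_inner_comm v d,
    real_inner_comm w d] at h2
  linear_combination h2
lemma aux_deriv (x : ℝ) :
    HasDerivAt (fun y : ℝ => y / Real.sqrt (1 + y ^ 2)) (1 / Real.sqrt (1 + x ^ 2) ^ 3) x := by
  have h1 : (0:ℝ) < 1 + x ^ 2 := by positivity
  have hs : Real.sqrt (1 + x ^ 2) ≠ 0 := by positivity
  have hd : HasDerivAt (fun y : ℝ => 1 + y ^ 2) (2 * x) x := by
    simpa using ((hasDerivAt_id x).pow 2).const_add 1
  have h2 := hd.sqrt h1.ne'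
  have h3 := (hasDerivAt_id x).div h2 hs
  refine HasDerivAt.congr_deriv h3 ?_
  have hsq : Real.sqrt (1 + x ^ 2) ^ 2 = 1 + x ^ 2 := Real.sq_sqrt h1.le
  field_simp
  simp only [id_eq]
  linear_combination hsq

lemma no_sign_change {b : ℝ → ℝ} (hc : Continuous b) (hne : ∀ s, b s ≠ 0)
    (x y : ℝ) (hx : 0 < b x) : 0 < b y := by
  by_contra h
  have hy : b y < 0 := lt_of_le_of_ne (not_lt.mp h) (hne y)
  have h0 : (0:ℝ) ∈ Set.uIcc (b x) (b y) := Set.mem_uIcc.mpr (Or.inr ⟨hy.le, hx.le⟩)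
  obtain ⟨z, _, hz⟩ := intermediate_value_uIcc hc.continuousOn h0
  exact hne z hz
lemma key_calc (κ τ : ℝ → ℝ) (n : ℝ) (s : ℝ) (hκ : 0 < κ s)
    (hsn : 0 < Real.sqrt (1 - n ^ 2)) (h1n : (0:ℝ) < 1 - n ^ 2)
    (hdiff : ∀ u, DifferentiableAt ℝ (fun u => τ u / κ u) u)
    (ε : ℝ) (hε : ε * ε = 1)
    {a : ℝ → ℝ}
    (hform : ∀ u, a u = ε * (Real.sqrt (1 - n ^ 2) *
      ((τ u / κ u) / Real.sqrt (1 + (τ u / κ u) ^ 2))))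
    (ha : HasDerivAt a (κ s * n) s) :
    κ s ^ 2 / (κ s ^ 2 + τ s ^ 2) ^ ((3:ℝ)/2) * deriv (fun u => τ u / κ u) s
      = ε * (n / Real.sqrt (1 - n ^ 2)) := by
  set f : ℝ → ℝ := fun u => τ u / κ u with hf_def
  have hfd : HasDerivAt f (deriv f s) s := (hdiff s).hasDerivAt
  have ht : (0:ℝ) < Real.sqrt (1 + f s ^ 2) := Real.sqrt_pos.mpr (by positivity)
  have hcomp : HasDerivAt (fun u => f u / Real.sqrt (1 + f u ^ 2))
      (1 / Real.sqrt (1 + f s ^ 2) ^ 3 * deriv f s) s := by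
    have := (aux_deriv (f s)).comp s hfd
    simpa [Function.comp_def] using this
  have hg : HasDerivAt (fun u => ε * (Real.sqrt (1 - n ^ 2) *
      (f u / Real.sqrt (1 + f u ^ 2))))
      (ε * (Real.sqrt (1 - n ^ 2) * (1 / Real.sqrt (1 + f s ^ 2) ^ 3 * deriv f s))) s :=
    (hcomp.const_mul _).const_mul ε
  have hag : a = fun u => ε * (Real.sqrt (1 - n ^ 2) * (f u / Real.sqrt (1 + f u ^ 2))) :=
    funext hform
  rw [← hag] at hg
  have eq := ha.unique hg
  have hS : κ s ^ 2 + τ s ^ 2 = κ s ^ 2 * (1 + f s ^ 2) := by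
    simp only [hf_def]
    field_simp
  have hrw : (κ s ^ 2 + τ s ^ 2) ^ ((3:ℝ)/2) = κ s ^ 3 * Real.sqrt (1 + f s ^ 2) ^ 3 := by
    rw [hS, Real.mul_rpow (by positivity) (by positivity)]
    congr 1
    · rw [← Real.rpow_natCast (κ s) 2, ← Real.rpow_mul hκ.le, ← Real.rpow_natCast (κ s) 3]
      norm_num
    · rw [Real.sqrt_eq_rpow,
        ← Real.rpow_natCast (((1:ℝ) + f s ^ 2) ^ ((1:ℝ)/2)) 3,
        ← Real.rpow_mul (by positivity)]
      norm_num
  rw [hrw]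
  have hκ3 : κ s ^ 3 ≠ 0 := by positivity
  have ht3 : Real.sqrt (1 + f s ^ 2) ^ 3 ≠ 0 := by positivity
  field_simp at eq
  field_simp
  linear_combination (-ε) * eq -
    (Real.sqrt (1 - n ^ 2) * deriv f s) * hε
/-- For a slant helix (⟨N, d⟩ = n with d a fixed unit vector,
0 < |n| < 1), the geodesic curvature of the principal normal indicatrix,
κ²/(κ²+τ²)^{3/2} · (τ/κ)', is constant equal to ± n/√(1-n²). -/
theorem slant_helix_geodesic_curvature_constant
    (ψ T N B : ℝ → EuclideanSpace ℝ (Fin 3)) (κ τ : ℝ → ℝ)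
    (d : EuclideanSpace ℝ (Fin 3)) (n : ℝ)
    (hκpos : ∀ s, 0 < κ s)
    (hψ : ∀ s, HasDerivAt ψ (T s) s)
    (hT : ∀ s, HasDerivAt T (κ s • N s) s)
    (hN : ∀ s, HasDerivAt N (-(κ s) • T s + τ s • B s) s)
    (hB : ∀ s, HasDerivAt B (-(τ s) • N s) s)
    (hTn : ∀ s, ‖T s‖ = 1) (hNn : ∀ s, ‖N s‖ = 1) (hBn : ∀ s, ‖B s‖ = 1)
    (hTN : ∀ s, ⟪T s, N s⟫ = 0) (hTB : ∀ s, ⟪T s, B s⟫ = 0)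
    (hNB : ∀ s, ⟪N s, B s⟫ = 0)
    (hd : ‖d‖ = 1) (hn0 : 0 < |n|) (hn1 : |n| < 1)
    (hangle : ∀ s, ⟪N s, d⟫ = n)
    (hκc : Continuous κ) (hτc : Continuous τ)
    (hdiff : ∀ s, DifferentiableAt ℝ (fun u => τ u / κ u) s)
    (hdc : Continuous (deriv (fun u => τ u / κ u))) :
    ∃ ε : ℝ, (ε = 1 ∨ ε = -1) ∧ ∀ s,
      κ s ^ 2 / (κ s ^ 2 + τ s ^ 2) ^ ((3:ℝ)/2) * deriv (fun u => τ u / κ u) s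
        = ε * (n / Real.sqrt (1 - n ^ 2)) := by
  set f : ℝ → ℝ := fun u => τ u / κ u with hf_def
  set a : ℝ → ℝ := fun s => ⟪T s, d⟫ with ha_def
  set b : ℝ → ℝ := fun s => ⟪B s, d⟫ with hb_def
  have hn2 : n ^ 2 < 1 := by nlinarith [abs_nonneg n, sq_abs n]
  have h1n : (0:ℝ) < 1 - n ^ 2 := by linarith
  have hsn : (0:ℝ) < Real.sqrt (1 - n ^ 2) := Real.sqrt_pos.mpr h1n
  -- derivative of a
  have ha' : ∀ s, HasDerivAt a (κ s * n) s := by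
    intro s
    have h := (hT s).inner ℝ (hasDerivAt_const s d)
    simp only [inner_zero_right, real_inner_smul_left, hangle, zero_add] at h
    exact h
  -- derivative of b
  have hb' : ∀ s, HasDerivAt b (-(τ s) * n) s := by
    intro s
    have h := (hB s).inner ℝ (hasDerivAt_const s d)
    simp only [inner_zero_right, real_inner_smul_left, hangle, zero_add] at h
    exact h
  -- ⟪N, d⟫ constant ⇒ -κ a + τ b = 0
  have hrel : ∀ s, -(κ s) * a s + τ s * b s = 0 := by
    intro s
    have h := (hN s).inner ℝ (hasDerivAt_const s d)
    have hconst : (fun t => ⟪N t, d⟫) = fun _ => n := funext hangle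
    rw [hconst] at h
    have h0 := h.unique (hasDerivAt_const s n)
    simp only [inner_zero_right, inner_add_left, real_inner_smul_left, zero_add] at h0
    linarith [h0]
  have haf : ∀ s, a s = f s * b s := by
    intro s
    have h := hrel s
    have hκ := (hκpos s).ne'
    simp only [hf_def]
    field_simp
    nlinarith [h]
  -- Parseval
  have hpar : ∀ s, a s ^ 2 + n ^ 2 + b s ^ 2 = 1 := by
    intro s
    have := parseval3 (T s) (N s) (B s) d (hTn s) (hNn s) (hBn s) (hTN s) (hTB s) (hNB s)
    rw [hangle s, hd] at this
    simpa using this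
  have hpos1f : ∀ s, (0:ℝ) < 1 + f s ^ 2 := fun s => by positivity
  have hbsq : ∀ s, b s ^ 2 = (1 - n ^ 2) / (1 + f s ^ 2) := by
    intro s
    rw [eq_div_iff (hpos1f s).ne']
    have h1 := hpar s
    have h2 := haf s
    linear_combination h1 - (a s + f s * b s) * h2
  have hbne : ∀ s, b s ≠ 0 := by
    intro s hbs
    have := hbsq s
    rw [hbs] at this
    have : (1 - n ^ 2) / (1 + f s ^ 2) = 0 := by linarith [this.symm]
    have := (div_eq_zero_iff.mp this)
    rcases this with h | h
    · linarith
    · linarith [hpos1f s]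
  have hbc : Continuous b :=
    continuous_iff_continuousAt.mpr fun s => (hb' s).differentiableAt.continuousAt
  have habs : ∀ s, |b s| = Real.sqrt (1 - n ^ 2) / Real.sqrt (1 + f s ^ 2) := by
    intro s
    rw [← Real.sqrt_sq_eq_abs, hbsq s, Real.sqrt_div h1n.le]
  -- choose the sign
  by_cases hb0 : 0 < b 0
  · refine ⟨1, Or.inl rfl, ?_⟩
    have hsign : ∀ s, 0 < b s := fun s => no_sign_change hbc hbne 0 s hb0
    have hbform : ∀ s, b s = Real.sqrt (1 - n ^ 2) / Real.sqrt (1 + f s ^ 2) := by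
      intro s; rw [← habs s, abs_of_pos (hsign s)]
    intro s
    exact key_calc κ τ n s (hκpos s) hsn h1n (hdiff) 1 (by norm_num)
      (by
        intro u
        have h := haf u
        rw [hbform u] at h
        rw [h]
        simp only [hf_def]
        ring)
      (ha' s)
  · refine ⟨-1, Or.inr rfl, ?_⟩
    have hb0' : 0 < -b 0 := by
      rcases lt_or_gt_of_ne (hbne 0) with h | h
      · linarith
      · exact absurd h hb0
    have hsign : ∀ s, 0 < -b s := fun s =>
      no_sign_change hbc.neg (fun u => neg_ne_zero.mpr (hbne u)) 0 s hb0'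
    have hbform : ∀ s, b s = -(Real.sqrt (1 - n ^ 2) / Real.sqrt (1 + f s ^ 2)) := by
      intro s
      have : |b s| = -b s := abs_of_neg (by linarith [hsign s])
      rw [habs s] at this
      linarith [this]
    intro s
    exact key_calc κ τ n s (hκpos s) hsn h1n (hdiff) (-1) (by norm_num)
      (by
        intro u
        have h := haf u
        rw [hbform u] at h
        rw [h]
        simp only [hf_def]
        ring)
      (ha' s)
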